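/- Let (b, w) be a bid on n goods, p ∈ ℝ^n a price vector, I the set of goods demanded by (b,w) at p, and b' the projection of b with respect to p. If I = {0,1,…,n} (the bid demands all goods) then b' = b. Otherwise, the set of goods demanded by (b', w) at p is again I, and the surplus gap of (b', w) at p equals the surplus gap of (b, w) at p plus 1. -/

import Mathlib

open Finset

noncomputable section

variable {n : ℕ}

/-- Extend a value/price vector in `ℝ^n` by a 0-th coordinate (the reject good) equal to 0. -/
def extVec (b : Fin n → ℝ) : Fin (n + 1) → ℝ := Fin.cons 0 b

/-- Surplus of good `i` (in `{0,…,n}`) for value vector `b` at price `p`. -/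
def surplus (b p : Fin n → ℝ) (i : Fin (n + 1)) : ℝ := extVec b i - extVec p i

/-- Maximal surplus over all goods (including the reject good). -/
def maxSurplus (b p : Fin n → ℝ) : ℝ :=
  Finset.univ.sup' Finset.univ_nonempty (surplus b p)

/-- The bid with value vector `b` demands good `i` at price `p`. -/
def Demands (b p : Fin n → ℝ) (i : Fin (n + 1)) : Prop :=
  ∀ j, surplus b p j ≤ surplus b p i

open Classical in
/-- The set of goods demanded by value vector `b` at price `p`. -/
def demandedSet (b p : Fin n → ℝ) : Finset (Fin (n + 1)) :=
  Finset.univ.filter fun i => Demands b p i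

/-- Indirect utility function of a bid list (bids are pairs of value vector and weight). -/
def indirectUtility (B : List ((Fin n → ℝ) × ℝ)) (p : Fin n → ℝ) : ℝ :=
  (B.map fun bw => bw.2 * maxSurplus bw.1 p).sum

/-- Surplus gap of the bid `b` at `p`: maximal surplus minus the best surplus on
a non-demanded good (junk value when every good is demanded). -/
def surplusGap (b p : Fin n → ℝ) : ℝ :=
  maxSurplus b p - sSup (surplus b p '' {i | i ∉ demandedSet b p})

/-- `B` is `ε`-valid at `p` if its indirect utility function is convex on the open
`L∞`-ball of radius `ε` around `p`. -/
def epsValid (B : List ((Fin n → ℝ) × ℝ)) (p : Fin n → ℝ) (ε : ℝ) : Prop :=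
  ConvexOn ℝ {q : Fin n → ℝ | ‖q - p‖ < ε} (indirectUtility B)

open Classical in
/-- Sum of the weights of bids in `B` that are marginal on both `i` and `i'` at `p`. -/
def marginalWeight (B : List ((Fin n → ℝ) × ℝ)) (p : Fin n → ℝ) (i i' : Fin (n + 1)) : ℝ :=
  (B.map fun bw => if Demands bw.1 p i ∧ Demands bw.1 p i' then bw.2 else 0).sum


open Classical in
/-- The projection of value vector `b` with respect to price `p`: where `I` is the set of
goods demanded by `b` at `p`, subtract the indicator vector of `{0,…,n} ∖ I` if `0 ∈ I`,
and otherwise add the indicator vector of `I`. (The 0-th coordinate is unaffected in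
either case, so this is well-defined as an operation on `ℝ^n`.) -/
def project (b p : Fin n → ℝ) : Fin n → ℝ := fun k =>
  if (0 : Fin (n + 1)) ∈ demandedSet b p then
    b k - (if k.succ ∈ demandedSet b p then 0 else 1)
  else
    b k + (if k.succ ∈ demandedSet b p then 1 else 0)


lemma surplus_zero' (b p : Fin n → ℝ) : surplus b p 0 = 0 := by
  simp [surplus, extVec]

lemma surplus_succ' (b p : Fin n → ℝ) (k : Fin n) :
    surplus b p k.succ = b k - p k := by
  simp [surplus, extVec]

lemma mem_demandedSet_iff (b p : Fin n → ℝ) (i : Fin (n+1)) :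
    i ∈ demandedSet b p ↔ ∀ j, surplus b p j ≤ surplus b p i := by
  classical
  unfold demandedSet
  exact Finset.mem_filter.trans (and_iff_right (Finset.mem_univ _))

lemma demandedSet_nonempty' (b p : Fin n → ℝ) : (demandedSet b p).Nonempty := by
  obtain ⟨i, -, hi⟩ := Finset.exists_max_image Finset.univ (surplus b p) Finset.univ_nonempty
  exact ⟨i, (mem_demandedSet_iff b p i).2 fun j => hi j (Finset.mem_univ j)⟩

lemma maxSurplus_eq' (b p : Fin n → ℝ) {i : Fin (n+1)} (hi : i ∈ demandedSet b p) :
    maxSurplus b p = surplus b p i :=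
  le_antisymm (Finset.sup'_le _ _ fun j _ => ((mem_demandedSet_iff b p i).1 hi) j)
    (Finset.le_sup' _ (Finset.mem_univ i))

lemma lt_maxSurplus' (b p : Fin n → ℝ) {j : Fin (n+1)} (hj : j ∉ demandedSet b p) :
    surplus b p j < maxSurplus b p := by
  rw [mem_demandedSet_iff] at hj
  push_neg at hj
  obtain ⟨j', hj'⟩ := hj
  exact hj'.trans_le (Finset.le_sup' _ (Finset.mem_univ j'))

lemma sSup_image_compl' (D : Finset (Fin (n+1))) (f : Fin (n+1) → ℝ)
    (hne : (Dᶜ : Finset (Fin (n+1))).Nonempty) :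
    sSup (f '' {i | i ∉ D}) = (Dᶜ).sup' hne f := by
  have h1 : {i | i ∉ D} = ↑(Dᶜ : Finset (Fin (n+1))) := by ext; simp
  rw [h1, ← Finset.coe_image,
    Finset.Nonempty.csSup_eq_max' (hne.image f), Finset.max'_eq_sup', Finset.sup'_image]
  rfl

lemma sup'_sub_const (F : Finset (Fin (n+1))) (hne : F.Nonempty) (f : Fin (n+1) → ℝ) (c : ℝ) :
    F.sup' hne (fun x => f x - c) = F.sup' hne f - c := by
  apply le_antisymm
  · exact Finset.sup'_le _ _ fun x hx => sub_le_sub_right (Finset.le_sup' _ hx) c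
  · rw [sub_le_iff_le_add]
    exact Finset.sup'_le _ _ fun x hx => by
      have := Finset.le_sup' (fun x => f x - c) hx
      linarith

/-- Let `I` be the set of goods demanded by the bid `(b,w)` at `p` and let
`b'` be the projection of `b` with respect to `p`. If `I = {0,…,n}` then `b' = b`; otherwise
the set of goods demanded by `(b',w)` at `p` is again `I`, and the surplus gap of `(b',w)`
at `p` equals the surplus gap of `(b,w)` at `p` plus 1. -/
theorem stmt5 (n : ℕ) (hn : 1 ≤ n) (b : Fin n → ℝ) (w : ℝ) (hw : w = 1 ∨ w = -1)
    (p : Fin n → ℝ) :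
    (demandedSet b p = Finset.univ → project b p = b) ∧
    (demandedSet b p ≠ Finset.univ →
      demandedSet (project b p) p = demandedSet b p ∧
      surplusGap (project b p) p = surplusGap b p + 1) := by
  classical
  set s := surplus b p with hs
  set s' := surplus (project b p) p with hs'
  set D := demandedSet b p with hD
  set M := maxSurplus b p with hM
  obtain ⟨i₀, hi₀⟩ := demandedSet_nonempty' b p
  have hMi₀ : M = s i₀ := maxSurplus_eq' b p hi₀
  constructor
  · intro hU
    funext k
    have h0 : (0 : Fin (n+1)) ∈ D := hU ▸ Finset.mem_univ _
    have hk : (k.succ : Fin (n+1)) ∈ D := hU ▸ Finset.mem_univ _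
    simp [project, ← hD, h0, hk]
  · intro hU
    have hcne : (Dᶜ : Finset (Fin (n+1))).Nonempty := by
      by_contra h
      rw [Finset.not_nonempty_iff_eq_empty, ← Finset.bot_eq_empty, compl_eq_bot] at h
      exact hU h
    by_cases h0 : (0 : Fin (n+1)) ∈ D
    · -- subtract indicator of complement
      have hrel : ∀ j, s' j = if j ∈ D then s j else s j - 1 := by
        intro j
        induction j using Fin.cases with
        | zero => rw [hs', hs, surplus_zero', surplus_zero', if_pos h0]
        | succ k =>
          rw [hs', hs, surplus_succ', surplus_succ', project, if_pos (hD ▸ h0)]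
          by_cases hk : (k.succ : Fin (n+1)) ∈ D
          · rw [if_pos (hD ▸ hk), if_pos hk]; ring
          · rw [if_neg (hD ▸ hk), if_neg hk]; ring
      have hle : ∀ j, s' j ≤ M := by
        intro j
        rw [hrel j]
        by_cases hj : j ∈ D
        · rw [if_pos hj]
          exact Finset.le_sup' (surplus b p) (Finset.mem_univ j)
        · rw [if_neg hj]; linarith [(lt_maxSurplus' b p hj)]
      have hDeq : demandedSet (project b p) p = D := by
        ext i
        rw [mem_demandedSet_iff, ← hs']
        constructor
        · intro hi
          by_contra hiD
          have h1 : s' i₀ ≤ s' i := hi i₀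
          rw [hrel i₀, if_pos hi₀, hrel i, if_neg hiD] at h1
          have := lt_maxSurplus' b p hiD
          rw [← hs, ← hM] at this
          linarith
        · intro hi j
          have h1 : s' i = s i := by rw [hrel i, if_pos hi]
          have h2 : M = s i := maxSurplus_eq' b p hi
          have := hle j
          linarith
      have hi₀' : i₀ ∈ demandedSet (project b p) p := by rw [hDeq]; exact hi₀
      have hM' : maxSurplus (project b p) p = M := by
        rw [maxSurplus_eq' (project b p) p hi₀', ← hs', hrel i₀, if_pos hi₀, hMi₀]
      refine ⟨hDeq, ?_⟩
      rw [surplusGap, surplusGap, hDeq, hM', ← hs', ← hs, ← hD, ← hM,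
        sSup_image_compl' D s' hcne, sSup_image_compl' D s hcne]
      have : (Dᶜ).sup' hcne s' = (Dᶜ).sup' hcne (fun x => s x - 1) :=
        Finset.sup'_congr hcne rfl fun x hx => by
          rw [hrel x, if_neg (Finset.mem_compl.1 hx)]
      rw [this, sup'_sub_const]
      ring
    · -- add indicator of D
      have hrel : ∀ j, s' j = if j ∈ D then s j + 1 else s j := by
        intro j
        induction j using Fin.cases with
        | zero => rw [hs', hs, surplus_zero', surplus_zero', if_neg h0]
        | succ k =>
          rw [hs', hs, surplus_succ', surplus_succ', project, if_neg (hD ▸ h0)]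
          by_cases hk : (k.succ : Fin (n+1)) ∈ D
          · rw [if_pos (hD ▸ hk), if_pos hk]; ring
          · rw [if_neg (hD ▸ hk), if_neg hk]; ring
      have hle : ∀ j, s' j ≤ M + 1 := by
        intro j
        rw [hrel j]
        by_cases hj : j ∈ D
        · rw [if_pos hj]
          have : s j ≤ M := Finset.le_sup' (surplus b p) (Finset.mem_univ j)
          linarith
        · rw [if_neg hj]; linarith [(lt_maxSurplus' b p hj)]
      have hDeq : demandedSet (project b p) p = D := by
        ext i
        rw [mem_demandedSet_iff, ← hs']
        constructor
        · intro hi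
          by_contra hiD
          have h1 : s' i₀ ≤ s' i := hi i₀
          rw [hrel i₀, if_pos hi₀, hrel i, if_neg hiD] at h1
          have := lt_maxSurplus' b p hiD
          rw [← hs, ← hM] at this
          linarith
        · intro hi j
          have h1 : s' i = s i + 1 := by rw [hrel i, if_pos hi]
          have h2 : M = s i := maxSurplus_eq' b p hi
          have := hle j
          linarith
      have hi₀' : i₀ ∈ demandedSet (project b p) p := by rw [hDeq]; exact hi₀
      have hM' : maxSurplus (project b p) p = M + 1 := by
        rw [maxSurplus_eq' (project b p) p hi₀', ← hs', hrel i₀, if_pos hi₀, hMi₀]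
      refine ⟨hDeq, ?_⟩
      rw [surplusGap, surplusGap, hDeq, hM', ← hs', ← hs, ← hD, ← hM,
        sSup_image_compl' D s' hcne, sSup_image_compl' D s hcne]
      have : (Dᶜ).sup' hcne s' = (Dᶜ).sup' hcne s :=
        Finset.sup'_congr hcne rfl fun x hx => by
          rw [hrel x, if_neg (Finset.mem_compl.1 hx)]
      rw [this]
      ring


end
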